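/- Let k have characteristic 2 and G = ⟨σ⟩ be cyclic of order 4 acting on V = V_3 via σx_1 = x_1+x_2, σx_2 = x_2+x_3, σx_3 = x_3. Then u := x_1^2 x_3 + x_1 x_3^2 + x_2^3 + x_2^2 x_3 is G-invariant, and k[V]^G is a free module over A = k[N^G(x_1), N^G_H(x_2), x_3] with basis {1, u}, where H = ⟨σ^2⟩, N^G(x_1) = Π_{i=0}^{3} σ^i(x_1), and N^G_H(x_2) = x_2 · σ(x_2). -/

import Mathlib

open MvPolynomial
set_option linter.unusedSectionVars false
set_option maxRecDepth 4000
/-- The action of the generator `σ` of `G = C₄` on `k[V₃] = k[x₁,x₂,x₃]`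
(char 2): `σx₁ = x₁+x₂`, `σx₂ = x₂+x₃`, `σx₃ = x₃` (variables `X 0, X 1, X 2`). -/
noncomputable def sigmaC4 (K : Type*) [CommSemiring K] :
    MvPolynomial (Fin 3) K →ₐ[K] MvPolynomial (Fin 3) K :=
  aeval ![X 0 + X 1, X 1 + X 2, X 2]

namespace C4aux
variable {K : Type*} [Field K] [CharP K 2]

local notation "R" => MvPolynomial (Fin 3) K

lemma two_eq_zero : (2 : R) = 0 := by
  have h : (2:K) = 0 := by exact_mod_cast CharP.cast_eq_zero K 2
  rw [← map_ofNat (C : K →+* R) 2, h, map_zero]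

lemma s0 : sigmaC4 K (X 0) = X 0 + X 1 := by simp [sigmaC4]
lemma s1 : sigmaC4 K (X 1) = X 1 + X 2 := by simp [sigmaC4]
lemma s2 : sigmaC4 K (X 2) = X 2 := by simp [sigmaC4]

/-- `w = x₁² + x₁x₃` -/
noncomputable def w : R := X 0 ^ 2 + X 0 * X 2
/-- normalized `N₁` -/
noncomputable def n₁ : R := X 0 * (X 0 + X 1) * (X 0 + X 2) * (X 0 + X 1 + X 2)
/-- normalized `N₂` -/
noncomputable def n₂ : R := X 1 ^ 2 + X 1 * X 2

lemma sw : sigmaC4 K w = w + n₂ := by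
  have h2 : (2:R) = 0 := two_eq_zero
  simp only [w, n₂, map_add, map_mul, map_pow, s0, s1, s2]
  linear_combination (X 0 * X 1 : R) * h2

lemma sn₂ : sigmaC4 K n₂ = n₂ := by
  have h2 : (2:R) = 0 := two_eq_zero
  simp only [n₂, map_add, map_mul, map_pow, s0, s1, s2]
  linear_combination (X 2^2 + X 1 * X 2 : R) * h2

lemma sn₁ : sigmaC4 K n₁ = n₁ := by
  have h2 : (2:R) = 0 := two_eq_zero
  simp only [n₁, map_add, map_mul, map_pow, s0, s1, s2]
  linear_combination (X 1*X 2^3 + 4*X 1^2*X 2^2 + 5*X 1^3*X 2 + 2*X 1^4 + X 0*X 2^3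
    + 6*X 0*X 1*X 2^2 + 11*X 0*X 1^2*X 2 + 6*X 0*X 1^3 + 2*X 0^2*X 2^2
    + 7*X 0^2*X 1*X 2 + 6*X 0^2*X 1^2 + X 0^3*X 2 + 2*X 0^3*X 1 : R) * h2

lemma ssX0 : sigmaC4 K (sigmaC4 K (X 0)) = X 0 + X 2 := by
  have h2 : (2:R) = 0 := two_eq_zero
  simp only [map_add, s0, s1, s2]
  linear_combination (X 1 : R) * h2

lemma ssw : sigmaC4 K (sigmaC4 K w) = w := by
  have h2 : (2:R) = 0 := two_eq_zero
  simp only [w, map_add, map_mul, map_pow, s0, s1, s2]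
  linear_combination (X 2^2 + 3*X 1*X 2 + 2*X 1^2 + X 0*X 2 + 2*X 0*X 1 : R) * h2

lemma X0sq : (X 0 : R)^2 = w + X 2 * X 0 := by
  have h2 : (2:R) = 0 := two_eq_zero
  simp only [w]; linear_combination (-(X 0 * X 2) : R) * h2

lemma X1sq : (X 1 : R)^2 = n₂ + X 2 * X 1 := by
  have h2 : (2:R) = 0 := two_eq_zero
  simp only [n₂]; linear_combination (-(X 1 * X 2) : R) * h2

lemma wsq : (w:R)^2 = n₁ + n₂ * w := by
  have h2 : (2:R) = 0 := two_eq_zero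
  simp only [w, n₁, n₂]
  linear_combination (-(X 0*X 1*X 2^2) - X 0*X 1^2*X 2 - 2*X 0^2*X 1*X 2 - X 0^2*X 1^2 - X 0^3*X 1 : R) * h2

end C4aux

namespace C4aux
variable {K : Type*} [Field K] [CharP K 2]
local notation "R" => MvPolynomial (Fin 3) K

/-- `A = K[n₁, n₂, x₃]` -/
noncomputable def Asub : Subalgebra K R := Algebra.adjoin K {n₁, n₂, X 2}
/-- `B = K[n₁, x₂, x₃]` -/
noncomputable def Bsub : Subalgebra K R := Algebra.adjoin K {n₁, X 1, X 2}
/-- `C = K[w, x₂, x₃]` -/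
noncomputable def Csub : Subalgebra K R := Algebra.adjoin K {w, X 1, X 2}

lemma mem1 {a b c : R} : a ∈ Algebra.adjoin K {a, b, c} := Algebra.subset_adjoin (by simp)
lemma mem2 {a b c : R} : b ∈ Algebra.adjoin K {a, b, c} := Algebra.subset_adjoin (by simp)
lemma mem3 {a b c : R} : c ∈ Algebra.adjoin K {a, b, c} := Algebra.subset_adjoin (by simp)

lemma n₂_mem_B : (n₂ : R) ∈ Bsub := by
  have : (n₂ : R) = X 1 ^ 2 + X 1 * X 2 := rfl
  rw [this]
  exact add_mem (pow_mem mem2 2) (mul_mem mem2 mem3)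

lemma A_le_B : (Asub : Subalgebra K R) ≤ Bsub :=
  Algebra.adjoin_le (by
    intro x hx
    rcases hx with rfl | rfl | rfl
    · exact mem1
    · exact n₂_mem_B
    · exact mem3)

lemma fixA : ∀ x ∈ (Asub : Subalgebra K R), sigmaC4 K x = x := by
  intro x hx
  have : (Asub : Subalgebra K R) ≤ AlgHom.equalizer (sigmaC4 K) (AlgHom.id K R) := by
    apply Algebra.adjoin_le
    intro y hy
    rcases hy with rfl | rfl | rfl
    · exact sn₁
    · exact sn₂
    · exact s2
  exact this hx

lemma fixssC : ∀ x ∈ (Csub : Subalgebra K R), sigmaC4 K (sigmaC4 K x) = x := by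
  intro x hx
  have : (Csub : Subalgebra K R) ≤
      AlgHom.equalizer ((sigmaC4 K).comp (sigmaC4 K)) (AlgHom.id K R) := by
    apply Algebra.adjoin_le
    intro y hy
    rcases hy with rfl | rfl | rfl
    · exact ssw
    · show sigmaC4 K (sigmaC4 K (X 1)) = X 1
      have h2 : (2:R) = 0 := two_eq_zero
      rw [s1, map_add, s1, s2]; linear_combination (X 2 : R) * h2
    · show sigmaC4 K (sigmaC4 K (X 2)) = X 2
      rw [s2, s2]
  exact this hx

lemma mapsB : ∀ x ∈ (Bsub : Subalgebra K R), sigmaC4 K x ∈ Bsub := by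
  intro x hx
  induction hx using Algebra.adjoin_induction with
  | mem y hy =>
    rcases hy with rfl | rfl | rfl
    · rw [sn₁]; exact mem1
    · rw [s1]; exact add_mem mem2 mem3
    · rw [s2]; exact mem3
  | algebraMap r => rw [AlgHom.commutes]; exact Subalgebra.algebraMap_mem _ r
  | add x y _ _ hx hy => rw [map_add]; exact add_mem hx hy
  | mul x y _ _ hx hy => rw [map_mul]; exact mul_mem hx hy

lemma dvdB : ∀ x ∈ (Bsub : Subalgebra K R), (X 2 : R) ∣ (x - sigmaC4 K x) := by
  intro x hx
  induction hx using Algebra.adjoin_induction with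
  | mem y hy =>
    rcases hy with rfl | rfl | rfl
    · rw [sn₁, sub_self]; exact dvd_zero _
    · rw [s1]; exact ⟨-1, by ring⟩
    · rw [s2, sub_self]; exact dvd_zero _
  | algebraMap r => rw [AlgHom.commutes, sub_self]; exact dvd_zero _
  | add x y _ _ hx hy => rw [map_add]; exact (sub_add_sub_comm x (sigmaC4 K x) y _ ▸ dvd_add hx hy)
  | mul x y _ _ hx hy =>
    rw [map_mul]
    have : x * y - sigmaC4 K x * sigmaC4 K y
        = (x - sigmaC4 K x) * y + sigmaC4 K x * (y - sigmaC4 K y) := by ring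
    rw [this]
    exact dvd_add (hx.mul_right y) ((hy.mul_left _))

end C4aux

namespace C4aux
variable {K : Type*} [Field K] [CharP K 2]
local notation "R" => MvPolynomial (Fin 3) K

/-- every polynomial is `p + q · x₁` with `p, q ∈ C` -/
lemma spanC (f : R) : ∃ p q : R, p ∈ Csub ∧ q ∈ Csub ∧ f = p + q * X 0 := by
  induction f using MvPolynomial.induction_on with
  | C a => exact ⟨C a, 0, Subalgebra.algebraMap_mem _ a, zero_mem _, by ring⟩
  | add f g hf hg =>
    obtain ⟨p, q, hp, hq, rfl⟩ := hf
    obtain ⟨p', q', hp', hq', rfl⟩ := hg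
    exact ⟨p + p', q + q', add_mem hp hp', add_mem hq hq', by ring⟩
  | mul_X f n hf =>
    obtain ⟨p, q, hp, hq, rfl⟩ := hf
    fin_cases n <;> simp only [Fin.zero_eta, Fin.mk_one, Fin.reduceFinMk]
    · refine ⟨q * w, p + q * X 2, mul_mem hq mem1, add_mem hp (mul_mem hq mem3), ?_⟩
      have := X0sq (K := K)
      ring_nf
      ring_nf at this
      linear_combination q * this
    · exact ⟨p * X 1, q * X 1, mul_mem hp mem2, mul_mem hq mem2, by ring⟩
    · exact ⟨p * X 2, q * X 2, mul_mem hp mem3, mul_mem hq mem3, by ring⟩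

/-- every element of `C` is `p + q · w` with `p, q ∈ B` -/
lemma spanB {f : R} (hf : f ∈ Csub) : ∃ p q : R, p ∈ Bsub ∧ q ∈ Bsub ∧ f = p + q * w := by
  induction hf using Algebra.adjoin_induction with
  | mem y hy =>
    rcases hy with rfl | rfl | rfl
    · exact ⟨0, 1, zero_mem _, one_mem _, by ring⟩
    · exact ⟨X 1, 0, mem2, zero_mem _, by ring⟩
    · exact ⟨X 2, 0, mem3, zero_mem _, by ring⟩
  | algebraMap r => exact ⟨algebraMap K _ r, 0, Subalgebra.algebraMap_mem _ r, zero_mem _, by ring⟩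
  | add x y _ _ hx hy =>
    obtain ⟨p, q, hp, hq, rfl⟩ := hx
    obtain ⟨p', q', hp', hq', rfl⟩ := hy
    exact ⟨p + p', q + q', add_mem hp hp', add_mem hq hq', by ring⟩
  | mul x y _ _ hx hy =>
    obtain ⟨p, q, hp, hq, rfl⟩ := hx
    obtain ⟨p', q', hp', hq', rfl⟩ := hy
    refine ⟨p * p' + q * q' * n₁, p * q' + p' * q + q * q' * n₂,
      add_mem (mul_mem hp hp') (mul_mem (mul_mem hq hq') mem1),
      add_mem (add_mem (mul_mem hp hq') (mul_mem hp' hq)) (mul_mem (mul_mem hq hq') n₂_mem_B), ?_⟩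
    have := wsq (K := K)
    linear_combination q * q' * this

/-- every element of `B` is `a + b · x₂` with `a, b ∈ A` -/
lemma spanA {f : R} (hf : f ∈ Bsub) : ∃ a b : R, a ∈ Asub ∧ b ∈ Asub ∧ f = a + b * X 1 := by
  induction hf using Algebra.adjoin_induction with
  | mem y hy =>
    rcases hy with rfl | rfl | rfl
    · exact ⟨n₁, 0, mem1, zero_mem _, by ring⟩
    · exact ⟨0, 1, zero_mem _, one_mem _, by ring⟩
    · exact ⟨X 2, 0, mem3, zero_mem _, by ring⟩
  | algebraMap r => exact ⟨algebraMap K _ r, 0, Subalgebra.algebraMap_mem _ r, zero_mem _, by ring⟩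
  | add x y _ _ hx hy =>
    obtain ⟨p, q, hp, hq, rfl⟩ := hx
    obtain ⟨p', q', hp', hq', rfl⟩ := hy
    exact ⟨p + p', q + q', add_mem hp hp', add_mem hq hq', by ring⟩
  | mul x y _ _ hx hy =>
    obtain ⟨p, q, hp, hq, rfl⟩ := hx
    obtain ⟨p', q', hp', hq', rfl⟩ := hy
    refine ⟨p * p' + q * q' * n₂, p * q' + p' * q + q * q' * X 2,
      add_mem (mul_mem hp hp') (mul_mem (mul_mem hq hq') mem2),
      add_mem (add_mem (mul_mem hp hq') (mul_mem hp' hq)) (mul_mem (mul_mem hq hq') mem3), ?_⟩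
    have := X1sq (K := K)
    linear_combination q * q' * this

end C4aux

namespace C4aux
variable {K : Type*} [Field K] [CharP K 2]
local notation "R" => MvPolynomial (Fin 3) K
local notation "D" => MvPolynomial (Fin 2) K
local notation "D1" => MvPolynomial (Fin 1) K
local notation "D0" => MvPolynomial (Fin 0) K

/-- composing with a monic nonconstant polynomial is injective at zero -/
lemma comp_eq_zero' {S : Type*} [CommRing S] [IsDomain S] {M P : Polynomial S}
    (hM : M.Monic) (hd : M.natDegree ≠ 0) (h : P.comp M = 0) : P = 0 := by
  by_contra hP
  have hl := Polynomial.leadingCoeff_comp (p := P) (q := M) hd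
  rw [h, Polynomial.leadingCoeff_zero, hM.leadingCoeff, one_pow, mul_one] at hl
  exact hP (Polynomial.leadingCoeff_eq_zero.mp hl.symm)

lemma inj0 (F : D1) (h : aeval ![(X 0 : D1) ^ 2] F = 0) : F = 0 := by
  set e := MvPolynomial.finSuccEquiv K 0
  have key : ∀ G : D1, e (aeval ![(X 0 : D1) ^ 2] G)
      = Polynomial.aeval ((Polynomial.X : Polynomial D0) ^ 2) (e G) := by
    intro G
    have hext : (e.toAlgHom.comp (aeval ![(X 0 : D1) ^ 2]) : D1 →ₐ[K] Polynomial D0)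
        = ((Polynomial.aeval ((Polynomial.X : Polynomial D0) ^ 2)).restrictScalars K).comp
            e.toAlgHom := by
      apply MvPolynomial.algHom_ext
      intro i
      fin_cases i
      simp [e, finSuccEquiv_X_zero]
    exact congrFun (congrArg (fun f => f.toFun) hext) G
  have h2 := key F
  rw [h, map_zero] at h2
  have : e F = 0 := by
    apply comp_eq_zero' (M := (Polynomial.X : Polynomial D0) ^ 2)
      (Polynomial.monic_X.pow 2) (by simp)
    rw [Polynomial.comp_eq_aeval]; exact h2.symm
  exact e.injective (by rw [this, map_zero])

lemma rho_inj : Function.Injective (aeval ![(X 0 : D1) ^ 2] : D1 →ₐ[K] D1) := by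
  intro a b hab
  have : aeval ![(X 0 : D1) ^ 2] (a - b) = 0 := by rw [map_sub, hab, sub_self]
  exact sub_eq_zero.mp (inj0 _ this)

/-- `α, β` : the images of `n₁, n₂` modulo `x₃`. -/
noncomputable def alphaP : D := (X 0 * (X 0 + X 1)) ^ 2
noncomputable def betaP : D := (X 1 : D) ^ 2

lemma e3_X0 : MvPolynomial.finSuccEquiv K 1 (X 0 : D) = Polynomial.X := finSuccEquiv_X_zero
lemma e3_X1 : MvPolynomial.finSuccEquiv K 1 (X 1 : D) = Polynomial.C (X 0) := by
  have : (X 1 : D) = X (Fin.succ 0) := rfl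
  rw [this, finSuccEquiv_X_succ]

lemma U2' (G : D) (h : aeval ![alphaP, betaP] G = (0 : D)) : G = 0 := by
  have hMmonic : ((Polynomial.X * (Polynomial.X + Polynomial.C (X 0))) ^ 2 : Polynomial D1).Monic :=
    (Polynomial.monic_X.mul (Polynomial.monic_X_add_C _)).pow 2
  have hMdeg : ((Polynomial.X * (Polynomial.X + Polynomial.C (X 0))) ^ 2 : Polynomial D1).natDegree ≠ 0 := by
    rw [Polynomial.natDegree_pow,
      Polynomial.Monic.natDegree_mul Polynomial.monic_X (Polynomial.monic_X_add_C _),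
      Polynomial.natDegree_X, Polynomial.natDegree_X_add_C]
    omega
  have hext : ((MvPolynomial.finSuccEquiv K 1).toAlgHom.comp (aeval ![alphaP, betaP]) : D →ₐ[K] Polynomial D1)
      = ((Polynomial.aeval ((Polynomial.X * (Polynomial.X + Polynomial.C (X 0))) ^ 2 : Polynomial D1)).restrictScalars K).comp
          (aeval ![Polynomial.X, Polynomial.C ((X 0 : D1) ^ 2)]) := by
    apply MvPolynomial.algHom_ext
    intro i
    fin_cases i
    · show MvPolynomial.finSuccEquiv K 1 ((aeval ![alphaP, betaP]) (X 0))
        = Polynomial.aeval _ ((aeval ![Polynomial.X, Polynomial.C ((X 0 : D1) ^ 2)]) (X 0))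
      rw [aeval_X, aeval_X]
      simp only [Matrix.cons_val_zero, Polynomial.aeval_X]
      rw [alphaP, map_pow, map_mul, map_add, e3_X0, e3_X1]
    · show MvPolynomial.finSuccEquiv K 1 ((aeval ![alphaP, betaP]) (X 1))
        = Polynomial.aeval _ ((aeval ![Polynomial.X, Polynomial.C ((X 0 : D1) ^ 2)]) (X 1))
      rw [aeval_X, aeval_X]
      simp only [Matrix.cons_val_one, Matrix.head_cons, Matrix.cons_val_zero, Polynomial.aeval_C, Polynomial.algebraMap_eq]
      rw [betaP, map_pow, e3_X1, Polynomial.C_pow]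
  have key := DFunLike.congr_fun hext G
  simp only [AlgHom.coe_comp, Function.comp_apply, AlgEquiv.toAlgHom_eq_coe, AlgHom.coe_coe,
    AlgHom.coe_restrictScalars'] at key
  rw [h, map_zero] at key
  have hz : (aeval ![Polynomial.X, Polynomial.C ((X 0 : D1) ^ 2)]) G = 0 := by
    apply comp_eq_zero' hMmonic hMdeg
    rw [Polynomial.comp_eq_aeval]; exact key.symm
  -- h₂ G = (e G).map ρ
  have hext2 : ((aeval ![Polynomial.X, Polynomial.C ((X 0 : D1) ^ 2)]) : D →ₐ[K] Polynomial D1)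
      = (Polynomial.mapAlgHom (aeval ![(X 0 : D1) ^ 2] : D1 →ₐ[K] D1)).comp
          (MvPolynomial.finSuccEquiv K 1).toAlgHom := by
    apply MvPolynomial.algHom_ext
    intro i
    fin_cases i
    · show (aeval ![Polynomial.X, Polynomial.C ((X 0 : D1) ^ 2)]) (X 0)
        = Polynomial.mapAlgHom (aeval ![(X 0 : D1) ^ 2] : D1 →ₐ[K] D1) (MvPolynomial.finSuccEquiv K 1 (X 0))
      rw [aeval_X, e3_X0]
      simp [Polynomial.mapAlgHom]
    · show (aeval ![Polynomial.X, Polynomial.C ((X 0 : D1) ^ 2)]) (X 1)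
        = Polynomial.mapAlgHom (aeval ![(X 0 : D1) ^ 2] : D1 →ₐ[K] D1) (MvPolynomial.finSuccEquiv K 1 (X 1))
      rw [aeval_X, e3_X1]
      simp [Polynomial.mapAlgHom]
  have key2 := DFunLike.congr_fun hext2 G
  simp only [AlgHom.coe_comp, Function.comp_apply, AlgEquiv.toAlgHom_eq_coe, AlgHom.coe_coe] at key2
  rw [hz] at key2
  have hmap0 : Polynomial.map (aeval ![(X 0 : D1) ^ 2] : D1 →ₐ[K] D1).toRingHom
      (MvPolynomial.finSuccEquiv K 1 G) = 0 := by
    have : (Polynomial.mapAlgHom (aeval ![(X 0 : D1) ^ 2] : D1 →ₐ[K] D1))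
        ((MvPolynomial.finSuccEquiv K 1) G) = 0 := key2.symm
    simpa [Polynomial.mapAlgHom] using this
  have : (MvPolynomial.finSuccEquiv K 1) G = 0 :=
    (Polynomial.map_eq_zero_iff rho_inj).mp hmap0
  exact (MvPolynomial.finSuccEquiv K 1).injective (by rw [this, map_zero])

end C4aux

namespace C4aux
variable {K : Type*} [Field K] [CharP K 2]
local notation "R" => MvPolynomial (Fin 3) K
local notation "D" => MvPolynomial (Fin 2) K

lemma eX0 : MvPolynomial.finSuccEquiv K 2 (X 0 : R) = Polynomial.X := finSuccEquiv_X_zero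
lemma eX1 : MvPolynomial.finSuccEquiv K 2 (X 1 : R) = Polynomial.C (X 0 : D) := by
  have : (X 1 : R) = X (Fin.succ 0) := rfl
  rw [this, finSuccEquiv_X_succ]
lemma eX2 : MvPolynomial.finSuccEquiv K 2 (X 2 : R) = Polynomial.C (X 1 : D) := by
  have : (X 2 : R) = X (Fin.succ 1) := rfl
  rw [this, finSuccEquiv_X_succ]

noncomputable def Mpoly : Polynomial D :=
  Polynomial.X * (Polynomial.X + Polynomial.C (X 0)) * (Polynomial.X + Polynomial.C (X 1)) *
    (Polynomial.X + Polynomial.C (X 0) + Polynomial.C (X 1))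
noncomputable def Wpoly : Polynomial D :=
  Polynomial.X * (Polynomial.X + Polynomial.C (X 1))

lemma Mpoly_monic : (Mpoly : Polynomial D).Monic := by
  rw [Mpoly, add_assoc, ← Polynomial.C_add]
  exact ((Polynomial.monic_X.mul (Polynomial.monic_X_add_C _)).mul
    (Polynomial.monic_X_add_C _)).mul (Polynomial.monic_X_add_C _)

lemma Mpoly_deg : (Mpoly : Polynomial D).natDegree = 4 := by
  rw [Mpoly, add_assoc, ← Polynomial.C_add,
    Polynomial.Monic.natDegree_mul ((Polynomial.monic_X.mul (Polynomial.monic_X_add_C _)).mul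
      (Polynomial.monic_X_add_C _)) (Polynomial.monic_X_add_C _),
    Polynomial.Monic.natDegree_mul (Polynomial.monic_X.mul (Polynomial.monic_X_add_C _))
      (Polynomial.monic_X_add_C _),
    Polynomial.Monic.natDegree_mul Polynomial.monic_X (Polynomial.monic_X_add_C _),
    Polynomial.natDegree_X, Polynomial.natDegree_X_add_C, Polynomial.natDegree_X_add_C,
    Polynomial.natDegree_X_add_C]

lemma Wpoly_monic : (Wpoly : Polynomial D).Monic :=
  Polynomial.monic_X.mul (Polynomial.monic_X_add_C _)

lemma Wpoly_deg : (Wpoly : Polynomial D).natDegree = 2 := by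
  rw [Wpoly, Polynomial.Monic.natDegree_mul Polynomial.monic_X (Polynomial.monic_X_add_C _),
    Polynomial.natDegree_X, Polynomial.natDegree_X_add_C]

lemma e_n₁ : MvPolynomial.finSuccEquiv K 2 n₁ = Mpoly := by
  rw [n₁, Mpoly, map_mul, map_mul, map_mul, map_add, map_add, map_add, map_add, eX0, eX1, eX2]

lemma e_w : MvPolynomial.finSuccEquiv K 2 w = Wpoly := by
  rw [w, Wpoly, map_add, map_mul, map_pow, eX0, eX2]; ring

lemma range_vec3 (a b c : R) : Set.range ![a, b, c] = {a, b, c} := by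
  ext x
  simp [Matrix.range_cons, Matrix.range_cons_empty]
  tauto

lemma B_eq_range : (Bsub : Subalgebra K R) = (aeval ![n₁, X 1, X 2]).range := by
  rw [Bsub, ← range_vec3, Algebra.adjoin_range_eq_range_aeval]

lemma A_eq_range : (Asub : Subalgebra K R) = (aeval ![n₁, n₂, X 2]).range := by
  rw [Asub, ← range_vec3, Algebra.adjoin_range_eq_range_aeval]

lemma keyB (F : MvPolynomial (Fin 3) K) :
    MvPolynomial.finSuccEquiv K 2 (aeval ![n₁, X 1, X 2] F)
      = Polynomial.aeval Mpoly
          (aeval ![Polynomial.X, Polynomial.C (X 0 : D), Polynomial.C (X 1 : D)] F) := by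
  have hext : ((MvPolynomial.finSuccEquiv K 2).toAlgHom.comp (aeval ![n₁, X 1, X 2])
        : MvPolynomial (Fin 3) K →ₐ[K] Polynomial D)
      = ((Polynomial.aeval (Mpoly : Polynomial D)).restrictScalars K).comp
          (aeval ![Polynomial.X, Polynomial.C (X 0 : D), Polynomial.C (X 1 : D)]) := by
    apply MvPolynomial.algHom_ext
    intro i
    fin_cases i
    · show MvPolynomial.finSuccEquiv K 2 ((aeval ![n₁, X 1, X 2]) (X 0)) = Polynomial.aeval _
        ((aeval ![Polynomial.X, Polynomial.C (X 0 : D), Polynomial.C (X 1 : D)]) (X 0))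
      rw [aeval_X, aeval_X]
      simp only [Matrix.cons_val_zero, Polynomial.aeval_X]
      exact e_n₁
    · show MvPolynomial.finSuccEquiv K 2 ((aeval ![n₁, X 1, X 2]) (X 1)) = Polynomial.aeval _
        ((aeval ![Polynomial.X, Polynomial.C (X 0 : D), Polynomial.C (X 1 : D)]) (X 1))
      rw [aeval_X, aeval_X]
      simp only [Matrix.cons_val_one, Matrix.head_cons, Matrix.cons_val_zero, Polynomial.aeval_C,
        Polynomial.algebraMap_eq]
      exact eX1
    · show MvPolynomial.finSuccEquiv K 2 ((aeval ![n₁, X 1, X 2]) (X 2)) = Polynomial.aeval _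
        ((aeval ![Polynomial.X, Polynomial.C (X 0 : D), Polynomial.C (X 1 : D)]) (X 2))
      rw [aeval_X, aeval_X]
      simp only [Matrix.cons_val_two, Matrix.tail_cons, Matrix.head_cons, Polynomial.aeval_C,
        Polynomial.algebraMap_eq]
      exact eX2
  have := DFunLike.congr_fun hext F
  simpa using this

lemma U1 {p q : R} (hp : p ∈ Bsub) (hq : q ∈ Bsub) (h : p + q * w = 0) : p = 0 ∧ q = 0 := by
  rw [B_eq_range] at hp hq
  rw [AlgHom.mem_range] at hp hq
  obtain ⟨F, hF⟩ := hp
  obtain ⟨G, hG⟩ := hq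
  set P₁ := aeval ![Polynomial.X, Polynomial.C (X 0 : D), Polynomial.C (X 1 : D)] F with hP₁
  set P₂ := aeval ![Polynomial.X, Polynomial.C (X 0 : D), Polynomial.C (X 1 : D)] G with hP₂
  have hep : MvPolynomial.finSuccEquiv K 2 p = Polynomial.aeval Mpoly P₁ := by
    rw [← hF]; exact keyB F
  have heq : MvPolynomial.finSuccEquiv K 2 q = Polynomial.aeval Mpoly P₂ := by
    rw [← hG]; exact keyB G
  have h0 : Polynomial.aeval Mpoly P₁ + Polynomial.aeval Mpoly P₂ * (Wpoly (K := K)) = 0 := by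
    rw [← hep, ← heq, ← e_w, ← map_mul, ← map_add, h, map_zero]
  by_cases hc : Polynomial.aeval Mpoly P₂ = (0 : Polynomial D)
  · have hq0 : q = 0 := by
      apply (MvPolynomial.finSuccEquiv K 2).injective
      rw [heq, hc, map_zero]
    have hp0 : p = 0 := by
      apply (MvPolynomial.finSuccEquiv K 2).injective
      rw [hep, map_zero]
      rw [hc, zero_mul, add_zero] at h0
      exact h0
    exact ⟨hp0, hq0⟩
  · exfalso
    have hW : (Wpoly : Polynomial D) ≠ 0 := Wpoly_monic.ne_zero
    have hcomp2 : P₂.comp Mpoly ≠ 0 := by rw [Polynomial.comp_eq_aeval]; exact hc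
    have hprod : P₂.comp Mpoly * Wpoly ≠ 0 := mul_ne_zero hcomp2 hW
    have h1 : P₁.comp Mpoly = -(P₂.comp Mpoly * Wpoly) := by
      rw [Polynomial.comp_eq_aeval, Polynomial.comp_eq_aeval]
      linear_combination h0
    have hcomp1 : P₁.comp Mpoly ≠ 0 := by rw [h1]; exact neg_ne_zero.mpr hprod
    have hPne1 : P₁ ≠ 0 := fun hh => hcomp1 (by rw [hh, Polynomial.zero_comp])
    have hPne2 : P₂ ≠ 0 := fun hh => hcomp2 (by rw [hh, Polynomial.zero_comp])
    have hd := congrArg Polynomial.natDegree h1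
    rw [Polynomial.natDegree_neg, Polynomial.natDegree_mul hcomp2 hW,
      Polynomial.natDegree_comp, Polynomial.natDegree_comp, Mpoly_deg, Wpoly_deg] at hd
    omega

end C4aux

namespace C4aux
variable {K : Type*} [Field K] [CharP K 2]
local notation "R" => MvPolynomial (Fin 3) K
local notation "D" => MvPolynomial (Fin 2) K

lemma splitX2 (G : R) :
    ∃ (G₀ : D) (G₁ : R), G = rename Fin.castSucc G₀ + X 2 * G₁ := by
  induction G using MvPolynomial.induction_on with
  | C a => exact ⟨C a, 0, by rw [rename_C]; ring⟩
  | add f g hf hg =>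
    obtain ⟨f₀, f₁, rfl⟩ := hf
    obtain ⟨g₀, g₁, rfl⟩ := hg
    exact ⟨f₀ + g₀, f₁ + g₁, by rw [map_add]; ring⟩
  | mul_X f n hf =>
    obtain ⟨f₀, f₁, rfl⟩ := hf
    fin_cases n <;> simp only [Fin.zero_eta, Fin.mk_one, Fin.reduceFinMk]
    · refine ⟨f₀ * X 0, f₁ * X 0, ?_⟩
      rw [map_mul, rename_X]
      show _ = rename Fin.castSucc f₀ * X 0 + X 2 * (f₁ * X 0)
      ring
    · refine ⟨f₀ * X 1, f₁ * X 1, ?_⟩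
      rw [map_mul, rename_X]
      show _ = rename Fin.castSucc f₀ * X 1 + X 2 * (f₁ * X 1)
      ring
    · exact ⟨0, rename Fin.castSucc f₀ + X 2 * f₁, by rw [map_zero]; ring⟩

/-- reduction mod `x₃` -/
noncomputable def piMap : MvPolynomial (Fin 3) K →ₐ[K] D := aeval ![X 0, X 1, 0]

lemma pi_n₁ : piMap (n₁ : R) = alphaP := by
  rw [n₁, alphaP, piMap]
  simp only [map_mul, map_add, aeval_X, Matrix.cons_val_zero, Matrix.cons_val_one,
    Matrix.head_cons, Matrix.cons_val_two, Matrix.tail_cons]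
  ring

lemma pi_n₂ : piMap (n₂ : R) = betaP := by
  rw [n₂, betaP, piMap]
  simp only [map_add, map_mul, map_pow, aeval_X, Matrix.cons_val_zero, Matrix.cons_val_one,
    Matrix.head_cons, Matrix.cons_val_two, Matrix.tail_cons]
  ring

lemma pi_comp (G₀ : D) :
    piMap (aeval ![(n₁ : R), n₂] G₀) = aeval ![alphaP, betaP] G₀ := by
  have hext : ((piMap : MvPolynomial (Fin 3) K →ₐ[K] D).comp (aeval ![(n₁ : R), n₂]))
      = aeval ![alphaP, betaP] := by
    apply MvPolynomial.algHom_ext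
    intro i
    fin_cases i
    · show piMap ((aeval ![(n₁ : R), n₂]) (X 0)) = (aeval ![alphaP, betaP]) (X 0)
      rw [aeval_X, aeval_X]
      simp only [Matrix.cons_val_zero]
      exact pi_n₁
    · show piMap ((aeval ![(n₁ : R), n₂]) (X 1)) = (aeval ![alphaP, betaP]) (X 1)
      rw [aeval_X, aeval_X]
      simp only [Matrix.cons_val_one, Matrix.head_cons]
      exact pi_n₂
  exact DFunLike.congr_fun hext G₀

lemma factor_out {q : R} (hq : q ∈ Asub) (hdvd : (X 2 : R) ∣ q * n₂) :
    ∃ c ∈ (Asub : Subalgebra K R), q = X 2 * c := by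
  rw [A_eq_range] at hq
  rw [AlgHom.mem_range] at hq
  obtain ⟨G, hG⟩ := hq
  obtain ⟨G₀, G₁, rfl⟩ := splitX2 G
  rw [map_add, map_mul] at hG
  have hX2 : (aeval ![(n₁ : R), n₂, X 2]) ((X 2 : R)) = (X 2 : R) := by
    rw [aeval_X]; rfl
  rw [hX2] at hG
  have hren : (aeval ![(n₁ : R), n₂, X 2]) (rename Fin.castSucc G₀)
      = aeval ![(n₁ : R), n₂] G₀ := by
    have hcomp : (![(n₁ : R), n₂, X 2] ∘ Fin.castSucc) = ![(n₁ : R), n₂] := by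
      funext i; fin_cases i <;> rfl
    rw [aeval_rename, hcomp]
  rw [hren] at hG
  -- apply piMap
  have hpi : piMap (q * n₂) = 0 := by
    obtain ⟨t, ht⟩ := hdvd
    rw [ht, map_mul]
    have : piMap (X 2 : R) = 0 := by rw [piMap, aeval_X]; rfl
    rw [this, zero_mul]
  rw [map_mul, pi_n₂] at hpi
  have hbeta : (betaP : D) ≠ 0 := pow_ne_zero _ (X_ne_zero 1)
  have hpiq : piMap q = 0 := by
    rcases mul_eq_zero.mp hpi with h | h
    · exact h
    · exact absurd h hbeta
  rw [← hG, map_add, map_mul, pi_comp] at hpiq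
  have : piMap (X 2 : R) = 0 := by rw [piMap, aeval_X]; rfl
  rw [this, zero_mul, add_zero] at hpiq
  have hG₀ : G₀ = 0 := U2' G₀ hpiq
  rw [hG₀, map_zero, zero_add] at hG
  refine ⟨aeval ![(n₁ : R), n₂, X 2] G₁, ?_, hG.symm⟩
  rw [A_eq_range]
  exact ⟨G₁, rfl⟩

lemma BfixToA {q : R} (hq : q ∈ Bsub) (hfix : sigmaC4 K q = q) : q ∈ Asub := by
  obtain ⟨a, b, ha, hb, rfl⟩ := spanA hq
  have hσ : sigmaC4 K (a + b * X 1) = a + b * (X 1 + X 2) := by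
    rw [map_add, map_mul, s1, fixA a ha, fixA b hb]
  rw [hσ] at hfix
  have hbX2 : b * X 2 = 0 := by linear_combination hfix
  have hb0 : b = 0 := by
    rcases mul_eq_zero.mp hbX2 with h | h
    · exact h
    · exact absurd h (X_ne_zero 2)
  rw [hb0, zero_mul, add_zero]
  exact ha

end C4aux

namespace C4aux
variable {K : Type*} [Field K] [CharP K 2]
local notation "R" => MvPolynomial (Fin 3) K

lemma n₁_def : (n₁ : R) = X 0 * (X 0 + X 1) * (X 0 + X 2) * (X 0 + X 1 + X 2) := rfl
lemma n₂_def : (n₂ : R) = X 1 ^ 2 + X 1 * X 2 := rfl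
lemma w_def : (w : R) = X 0 ^ 2 + X 0 * X 2 := rfl

lemma T_mem_B : (X 1 ^ 3 + X 1 ^ 2 * X 2 : R) ∈ Bsub :=
  add_mem (pow_mem mem2 3) (mul_mem (pow_mem mem2 2) mem3)

end C4aux

open C4aux in
/-- For `char k = 2` and `G = C₄` acting on `V = V₃`,
`u = x₁²x₃ + x₁x₃² + x₂³ + x₂²x₃` is `G`-invariant and `k[V]^G` is a free module
over `A = k[N^G(x₁), N^G_H(x₂), x₃]` with basis `{1, u}`, where `H = ⟨σ²⟩`,
`N^G(x₁) = ∏_{i<4} σ^i(x₁)` and `N^G_H(x₂) = x₂·σ(x₂)`. -/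
theorem invariants_C4_free_basis_one_u
    {K : Type*} [Field K] [CharP K 2]
    (u N₁ N₂ : MvPolynomial (Fin 3) K)
    (hu : u = X 0 ^ 2 * X 2 + X 0 * X 2 ^ 2 + X 1 ^ 3 + X 1 ^ 2 * X 2)
    (hN₁ : N₁ = ∏ i ∈ Finset.range 4, (⇑(sigmaC4 K))^[i] (X 0))
    (hN₂ : N₂ = X 1 * sigmaC4 K (X 1)) :
    sigmaC4 K u = u ∧
    (∀ g : MvPolynomial (Fin 3) K, sigmaC4 K g = g →
        ∃ c₁ ∈ Algebra.adjoin K {N₁, N₂, X 2}, ∃ c₂ ∈ Algebra.adjoin K {N₁, N₂, X 2},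
          g = c₁ + c₂ * u) ∧
    (∀ c₁ ∈ Algebra.adjoin K {N₁, N₂, X 2}, ∀ c₂ ∈ Algebra.adjoin K {N₁, N₂, X 2},
        c₁ + c₂ * u = 0 → c₁ = 0 ∧ c₂ = 0) := by
  have h2 : (2 : MvPolynomial (Fin 3) K) = 0 := two_eq_zero
  -- normalize N₂
  have hN₂n : N₂ = n₂ := by rw [hN₂, s1, n₂_def]; ring
  -- normalize N₁
  have hN₁n : N₁ = n₁ := by
    rw [hN₁]
    have e1 : (⇑(sigmaC4 K))^[1] (X 0 : MvPolynomial (Fin 3) K) = X 0 + X 1 := by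
      rw [Function.iterate_one, s0]
    have e2 : (⇑(sigmaC4 K))^[2] (X 0 : MvPolynomial (Fin 3) K)
        = X 0 + X 1 + (X 1 + X 2) := by
      show sigmaC4 K (sigmaC4 K (X 0)) = _
      rw [s0, map_add, s0, s1]
    have e3 : (⇑(sigmaC4 K))^[3] (X 0 : MvPolynomial (Fin 3) K)
        = X 0 + X 1 + (X 1 + X 2) + (X 1 + X 2 + X 2) := by
      show sigmaC4 K (sigmaC4 K (sigmaC4 K (X 0))) = _
      rw [s0, map_add, s0, s1, map_add, map_add, s0, s1, map_add, s1, s2]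
    rw [Finset.prod_range_succ, Finset.prod_range_succ, Finset.prod_range_succ,
      Finset.prod_range_one, Function.iterate_zero_apply, e1, e2, e3, n₁_def]
    linear_combination (X 0*X 1*X 2^2 + 4*X 0*X 1^2*X 2 + 3*X 0*X 1^3 + X 0^2*X 2^2
      + 5*X 0^2*X 1*X 2 + 5*X 0^2*X 1^2 + X 0^3*X 2 + 2*X 0^3*X 1
      : MvPolynomial (Fin 3) K) * h2
  have hAeq : Algebra.adjoin K {N₁, N₂, X 2} = (Asub : Subalgebra K (MvPolynomial (Fin 3) K)) := by
    rw [hN₁n, hN₂n]; rfl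
  have hsu : sigmaC4 K u = u := by
    rw [hu]
    simp only [map_add, map_mul, map_pow, s0, s1, s2]
    linear_combination (X 2^3 + 3*X 1*X 2^2 + 2*X 1^2*X 2 + X 0*X 1*X 2
      : MvPolynomial (Fin 3) K) * h2
  refine ⟨hsu, ?_, ?_⟩
  · -- spanning
    intro g hg
    rw [hAeq]
    have hgg : sigmaC4 K (sigmaC4 K g) = g := by rw [hg, hg]
    obtain ⟨p, q, hp, hq, rfl⟩ := spanC g
    -- kill the x₁ part using σ²-invariance
    have hss : sigmaC4 K (sigmaC4 K (p + q * X 0)) = p + q * (X 0 + X 2) := by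
      rw [map_add, map_mul, map_add, map_mul, fixssC p hp, fixssC q hq, ssX0]
    have hqX2 : q * X 2 = 0 := by
      have h' : p + q * (X 0 + X 2) = p + q * X 0 := by rw [← hss, hgg]
      linear_combination h'
    have hq0 : q = 0 := by
      rcases mul_eq_zero.mp hqX2 with h | h
      · exact h
      · exact absurd h (X_ne_zero 2)
    rw [hq0, zero_mul, add_zero] at hg ⊢
    -- now g = p ∈ C; decompose over B
    obtain ⟨p₂, q₂, hp₂, hq₂, hpw⟩ := spanB hp
    rw [hpw] at hg ⊢
    have hσ : sigmaC4 K (p₂ + q₂ * w)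
        = sigmaC4 K p₂ + sigmaC4 K q₂ * (w + n₂) := by
      rw [map_add, map_mul, sw]
    rw [hσ] at hg
    have hm1 : p₂ - (sigmaC4 K p₂ + sigmaC4 K q₂ * n₂) ∈ Bsub :=
      sub_mem hp₂ (add_mem (mapsB _ hp₂) (mul_mem (mapsB _ hq₂) n₂_mem_B))
    have hm2 : q₂ - sigmaC4 K q₂ ∈ Bsub := sub_mem hq₂ (mapsB _ hq₂)
    have heq0 : (p₂ - (sigmaC4 K p₂ + sigmaC4 K q₂ * n₂))
        + (q₂ - sigmaC4 K q₂) * w = 0 := by linear_combination -hg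
    obtain ⟨hA, hB⟩ := U1 hm1 hm2 heq0
    have hqfix : sigmaC4 K q₂ = q₂ := (sub_eq_zero.mp hB).symm
    have hqA : q₂ ∈ Asub := BfixToA hq₂ hqfix
    have hps : p₂ = sigmaC4 K p₂ + q₂ * n₂ := by linear_combination hA - n₂ * hB
    have hdvd : (X 2 : MvPolynomial (Fin 3) K) ∣ q₂ * n₂ := by
      have hd := dvdB p₂ hp₂
      have : p₂ - sigmaC4 K p₂ = q₂ * n₂ := by linear_combination hps
      rwa [this] at hd
    obtain ⟨c₂, hc₂A, hqc⟩ := factor_out hqA hdvd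
    refine ⟨p₂ - c₂ * (X 1 ^ 3 + X 1 ^ 2 * X 2), ?_, c₂, hc₂A, ?_⟩
    · -- c₁ ∈ A
      apply BfixToA (sub_mem hp₂ (mul_mem (A_le_B hc₂A) T_mem_B))
      rw [map_sub, map_mul, map_add, map_pow, map_mul, map_pow, s1, s2, fixA c₂ hc₂A]
      linear_combination (-1 : MvPolynomial (Fin 3) K) * hps - n₂ * hqc
        - c₂ * (2*X 1^2*X 2 + 3*X 1*X 2^2 + X 2^3) * h2 - c₂ * X 2 * (n₂_def (K := K))
    · rw [hu, w_def]
      linear_combination ((X 0^2 + X 0 * X 2 : MvPolynomial (Fin 3) K)) * hqc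
  · -- independence
    intro c₁ hc₁ c₂ hc₂ h0
    rw [hAeq] at hc₁ hc₂
    have hc₁B := A_le_B hc₁
    have hc₂B := A_le_B hc₂
    have heq0 : (c₁ + c₂ * (X 1 ^ 3 + X 1 ^ 2 * X 2)) + (c₂ * X 2) * w = 0 := by
      rw [hu] at h0
      linear_combination h0 + c₂ * X 2 * (w_def (K := K))
    obtain ⟨hA, hB⟩ := U1 (add_mem hc₁B (mul_mem hc₂B T_mem_B)) (mul_mem hc₂B mem3) heq0
    have hc₂0 : c₂ = 0 := by
      rcases mul_eq_zero.mp hB with h | h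
      · exact h
      · exact absurd h (X_ne_zero 2)
    refine ⟨?_, hc₂0⟩
    rw [hc₂0, zero_mul, add_zero] at hA
    exact hA
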